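/- Let n ≥ 3 be an integer, λ > 0 and t > 0 real numbers, and define the density f(t_2,…,t_{n−1}) = (n−2)!·λ^{n−2}·exp(−λ·Σ_{j=2}^{n−1} t_j) / (1 − e^{−λt})^{n−2} on the region { t ≥ t_2 ≥ ⋯ ≥ t_{n−1} ≥ 0 } ⊆ ℝ^{n−2}. Then ∫ (2t + Σ_{j=2}^{n−1} t_j) · f(t_2,…,t_{n−1}) d(t_2,…,t_{n−1}) = 2t + ((n−2)/λ)·(1 − y(λt)), where y(x) = x e^{−x}/(1 − e^{−x}). -/

import Mathlib

open MeasureTheory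

namespace YuleAux

open Real Set

theorem oneDimA (lam t : ℝ) (ht : 0 < t) :
    ∫ x in Icc (0:ℝ) t, lam * Real.exp (-(lam * x)) = 1 - Real.exp (-(lam*t)) := by
  rw [integral_Icc_eq_integral_Ioc, ← intervalIntegral.integral_of_le ht.le]
  have : ∀ x ∈ uIcc (0:ℝ) t, HasDerivAt (fun y => -Real.exp (-(lam * y)))
      (lam * Real.exp (-(lam * x))) x := by
    intro x _
    have h := ((((hasDerivAt_id x).const_mul lam).fun_neg).exp).fun_neg
    refine h.congr_deriv ?_
    simp
    ring
  rw [intervalIntegral.integral_eq_sub_of_hasDerivAt this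
    (Continuous.intervalIntegrable (by continuity) 0 t)]
  simp
  ring

theorem oneDimB (lam t : ℝ) (hlam : 0 < lam) (ht : 0 < t) :
    ∫ x in Icc (0:ℝ) t, x * (lam * Real.exp (-(lam * x)))
      = (1 - Real.exp (-(lam*t)))/lam - t * Real.exp (-(lam*t)) := by
  rw [integral_Icc_eq_integral_Ioc, ← intervalIntegral.integral_of_le ht.le]
  have : ∀ x ∈ uIcc (0:ℝ) t, HasDerivAt
      (fun y => -(y * Real.exp (-(lam * y))) - Real.exp (-(lam * y))/lam)
      (x * (lam * Real.exp (-(lam * x)))) x := by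
    intro x _
    have h1 : HasDerivAt (fun y : ℝ => Real.exp (-(lam * y)))
        (Real.exp (-(lam * x)) * (-lam)) x := by
      have := (((hasDerivAt_id x).const_mul lam).fun_neg).exp
      refine this.congr_deriv ?_
      simp
    have h2 := (((hasDerivAt_id x).fun_mul h1).fun_neg).fun_sub (h1.div_const lam)
    refine h2.congr_deriv ?_
    simp only [id]
    field_simp
    ring
  rw [intervalIntegral.integral_eq_sub_of_hasDerivAt this
    (Continuous.intervalIntegrable (by continuity) 0 t)]
  field_simp
  simp only [mul_zero, neg_zero, Real.exp_zero]
  ring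

theorem cubeProd (m : ℕ) (t : ℝ) (f : Fin m → ℝ → ℝ) :
    ∫ v in (Set.univ.pi fun _ : Fin m => Icc (0:ℝ) t), ∏ j, f j (v j)
      = ∏ j, ∫ x in Icc (0:ℝ) t, f j x := by
  rw [← integral_indicator (MeasurableSet.univ_pi fun _ => measurableSet_Icc)]
  have : (Set.univ.pi fun _ : Fin m => Icc (0:ℝ) t).indicator (fun v => ∏ j, f j (v j))
      = fun v => ∏ j, (Icc (0:ℝ) t).indicator (f j) (v j) := by
    funext v
    by_cases h : v ∈ Set.univ.pi fun _ : Fin m => Icc (0:ℝ) t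
    · rw [Set.indicator_of_mem h]
      exact Finset.prod_congr rfl fun j _ => (Set.indicator_of_mem (h j trivial) _).symm
    · rw [Set.indicator_of_notMem h]
      rw [Set.mem_univ_pi] at h
      push_neg at h
      obtain ⟨j, hj⟩ := h
      exact (Finset.prod_eq_zero (Finset.mem_univ j) (Set.indicator_of_notMem hj _)).symm
  rw [this, integral_fintype_prod_volume_eq_prod]
  exact Finset.prod_congr rfl fun j _ => integral_indicator measurableSet_Icc

theorem strictMono_perm_eq_one (m : ℕ) (ρ : Equiv.Perm (Fin m)) (h : StrictMono ⇑ρ) : ρ = 1 := by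
  haveI : WellFoundedLT (Fin m) := inferInstance
  haveI : WellFoundedGT (Fin m) := inferInstance
  have h1 : id ≤ ⇑ρ := h.id_le
  have h2 : ⇑ρ ≤ id := h.le_id
  exact Equiv.ext fun x => le_antisymm (h2 x) (h1 x)

theorem ties_null (m : ℕ) :
    volume {v : Fin m → ℝ | ∃ i j : Fin m, i ≠ j ∧ v i = v j} = 0 := by
  have hsub : {v : Fin m → ℝ | ∃ i j : Fin m, i ≠ j ∧ v i = v j}
      ⊆ ⋃ i, ⋃ j, ⋃ (_ : i ≠ j), {v : Fin m → ℝ | v i = v j} := by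
    rintro v ⟨i, j, hij, hv⟩
    exact Set.mem_iUnion.mpr ⟨i, Set.mem_iUnion.mpr ⟨j, Set.mem_iUnion.mpr ⟨hij, hv⟩⟩⟩
  refine measure_mono_null hsub ?_
  refine measure_iUnion_null fun i => measure_iUnion_null fun j =>
    measure_iUnion_null fun hij => ?_
  have : {v : Fin m → ℝ | v i = v j}
      = (LinearMap.ker ((LinearMap.proj i : (Fin m → ℝ) →ₗ[ℝ] ℝ) - LinearMap.proj j)
          : Set (Fin m → ℝ)) := by
    ext v
    simp [sub_eq_zero]
  rw [this]
  apply Measure.addHaar_submodule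
  intro h
  have : (Pi.single i 1 : Fin m → ℝ) ∈
      LinearMap.ker ((LinearMap.proj i : (Fin m → ℝ) →ₗ[ℝ] ℝ) - LinearMap.proj j) :=
    h ▸ Submodule.mem_top
  simp [Pi.single_apply, hij.symm] at this

theorem yule_aux (m : ℕ) (hm : 1 ≤ m) (lam t : ℝ) (hlam : 0 < lam) (ht : 0 < t) :
    (∫ v in {v : Fin m → ℝ |
        (∀ i j : Fin m, i ≤ j → v j ≤ v i) ∧ (∀ i, 0 ≤ v i) ∧ ∀ i, v i ≤ t},
      (2 * t + ∑ j, v j) *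
        ((Nat.factorial m : ℝ) * lam ^ m * Real.exp (-lam * ∑ j, v j) /
          (1 - Real.exp (-lam * t)) ^ m)) =
    2 * t + (m : ℝ) / lam *
      (1 - lam * t * Real.exp (-(lam * t)) / (1 - Real.exp (-(lam * t)))) := by
  classical
  simp only [neg_mul]
  set D : ℝ := 1 - Real.exp (-(lam * t)) with hDdef
  have hexp : Real.exp (-(lam * t)) < 1 := by
    rw [← Real.exp_zero]
    exact Real.exp_lt_exp.mpr (by nlinarith)
  have hD : 0 < D := by rw [hDdef]; linarith
  set C : ℝ := (Nat.factorial m : ℝ) with hCdef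
  have hC : 0 < C := by
    rw [hCdef]; exact_mod_cast m.factorial_pos
  set F : (Fin m → ℝ) → ℝ := fun v =>
    (2 * t + ∑ j, v j) * (C * lam ^ m * Real.exp (-(lam * ∑ j, v j)) / D ^ m) with hFdef
  set S : Set (Fin m → ℝ) := {v : Fin m → ℝ |
      (∀ i j : Fin m, i ≤ j → v j ≤ v i) ∧ (∀ i, 0 ≤ v i) ∧ ∀ i, v i ≤ t} with hSdef
  set cube : Set (Fin m → ℝ) := Set.univ.pi fun _ => Icc (0:ℝ) t with hcubedef
  have hcubeC : IsCompact cube := isCompact_univ_pi fun _ => isCompact_Icc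
  have hcubeM : MeasurableSet cube := MeasurableSet.univ_pi fun _ => measurableSet_Icc
  have hsumcont : Continuous fun v : Fin m → ℝ => ∑ j, v j :=
    continuous_finset_sum _ fun j _ => continuous_apply j
  have hFcont : Continuous F := by
    apply Continuous.mul
    · exact continuous_const.add hsumcont
    · exact Continuous.div_const
        (continuous_const.mul (Real.continuous_exp.comp (continuous_const.mul hsumcont).neg)) _
  have hint : ∀ (g : (Fin m → ℝ) → ℝ), Continuous g → IntegrableOn g cube :=
    fun g hg => hg.continuousOn.integrableOn_compact hcubeC
  have hFint : IntegrableOn F cube := hint F hFcont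
  set A : Equiv.Perm (Fin m) → Set (Fin m → ℝ) :=
    fun σ => {v | ∀ i j : Fin m, i < j → v (σ j) < v (σ i)} ∩ cube with hAdef
  have hAsub : ∀ σ, A σ ⊆ cube := fun σ => Set.inter_subset_right
  have hAm : ∀ σ, MeasurableSet (A σ) := by
    intro σ
    refine MeasurableSet.inter ?_ hcubeM
    have : {v : Fin m → ℝ | ∀ i j : Fin m, i < j → v (σ j) < v (σ i)}
        = ⋂ i, ⋂ j, ⋂ (_ : i < j), {v : Fin m → ℝ | v (σ j) < v (σ i)} := by
      ext v; simp
    rw [this]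
    exact MeasurableSet.iInter fun i => MeasurableSet.iInter fun j =>
      MeasurableSet.iInter fun _ =>
        measurableSet_lt (measurable_pi_apply _) (measurable_pi_apply _)
  set N := {v : Fin m → ℝ | ∃ i j : Fin m, i ≠ j ∧ v i = v j} with hNdef
  have hN : volume N = 0 := ties_null m
  have hdisj : Pairwise (Function.onFun Disjoint A) := by
    intro σ τ hστ
    rw [Function.onFun, Set.disjoint_left]
    rintro v ⟨hσ, -⟩ ⟨hτ, -⟩
    apply hστ
    have hmono : StrictMono ⇑(σ.trans τ.symm) := by
      intro i j hij
      have h1 : v (σ j) < v (σ i) := hσ i j hij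
      simp only [Equiv.trans_apply]
      rcases lt_trichotomy (τ.symm (σ i)) (τ.symm (σ j)) with h | h | h
      · exact h
      · exfalso
        have h2 : σ i = σ j := by
          have := congrArg τ h
          simpa using this
        rw [h2] at h1
        exact lt_irrefl _ h1
      · exfalso
        have h2 := hτ _ _ h
        simp only [Equiv.apply_symm_apply] at h2
        exact lt_asymm h1 h2
    have hone := strictMono_perm_eq_one m _ hmono
    apply Equiv.ext
    intro x
    have hx : (σ.trans τ.symm) x = x := by rw [hone]; rfl
    simp only [Equiv.trans_apply] at hx
    exact (Equiv.symm_apply_eq τ).mp hx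
  have hcover : cube ⊆ (⋃ σ : Equiv.Perm (Fin m), A σ) ∪ N := by
    intro v hv
    by_cases hvN : v ∈ N
    · exact Or.inr hvN
    · left
      have hinj : ∀ i j : Fin m, i ≠ j → v i ≠ v j := by
        intro i j hij h
        exact hvN ⟨i, j, hij, h⟩
      refine Set.mem_iUnion.mpr ⟨Fin.revPerm.trans (Tuple.sort v), ⟨?_, hv⟩⟩
      intro i j hij
      simp only [Equiv.trans_apply, Fin.revPerm_apply]
      have hrev : Fin.rev j < Fin.rev i := Fin.rev_lt_rev.mpr hij
      have hmono := Tuple.monotone_sort v hrev.le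
      have hne : Tuple.sort v (Fin.rev j) ≠ Tuple.sort v (Fin.rev i) := by
        intro h
        exact absurd (Fin.rev_inj.mp ((Tuple.sort v).injective h)) (ne_of_gt hij)
      exact lt_of_le_of_ne hmono (hinj _ _ hne)
  have hsplit : ∫ v in cube, F v = ∑ σ : Equiv.Perm (Fin m), ∫ v in A σ, F v := by
    have h1 : cube =ᵐ[volume] ⋃ σ : Equiv.Perm (Fin m), A σ := by
      rw [ae_eq_set]
      constructor
      · refine measure_mono_null ?_ hN
        intro v hv
        rcases hcover hv.1 with h | h
        · exact absurd h hv.2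
        · exact h
      · have : (⋃ σ : Equiv.Perm (Fin m), A σ) \ cube = ∅ := by
          rw [Set.diff_eq_empty]
          exact Set.iUnion_subset hAsub
        rw [this]
        exact measure_empty
    rw [setIntegral_congr_set h1]
    exact integral_iUnion_fintype hAm hdisj fun σ => hFint.mono_set (hAsub σ)
  have hAeq : ∀ σ : Equiv.Perm (Fin m), ∫ v in A σ, F v = ∫ v in A 1, F v := by
    intro σ
    have hmp := MeasureTheory.volume_measurePreserving_piCongrLeft (fun _ : Fin m => ℝ) σ.symm
    set e := MeasurableEquiv.piCongrLeft (fun _ : Fin m => ℝ) σ.symm with hedef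
    have he : ∀ v : Fin m → ℝ, e v = fun i => v (σ i) := by
      intro v; funext i
      simp [hedef, MeasurableEquiv.piCongrLeft, Equiv.piCongrLeft]
    have hpre : e ⁻¹' (A 1) = A σ := by
      ext v
      rw [Set.mem_preimage, he v]
      constructor
      · rintro ⟨h1, h2⟩
        refine ⟨fun i j hij => h1 i j hij, fun i _ => ?_⟩
        have h3 := h2 (σ.symm i) trivial
        simpa using h3
      · rintro ⟨h1, h2⟩
        exact ⟨fun i j hij => h1 i j hij, fun i _ => h2 (σ i) trivial⟩
    have hFe : ∀ v : Fin m → ℝ, F (e v) = F v := by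
      intro v
      rw [he v]
      simp only [hFdef]
      rw [show (∑ j, v (σ j)) = ∑ j, v j from Equiv.sum_comp σ (fun j => v j)]
    rw [← hpre, ← hmp.setIntegral_preimage_emb e.measurableEmbedding F (A 1)]
    exact integral_congr_ae (Filter.Eventually.of_forall fun v => (hFe v).symm)
  have hcubefact : ∫ v in cube, F v = C * ∫ v in A 1, F v := by
    rw [hsplit, Finset.sum_congr rfl fun σ _ => hAeq σ, Finset.sum_const,
      Finset.card_univ, Fintype.card_perm, Fintype.card_fin, nsmul_eq_mul, hCdef]
  have hS : ∫ v in S, F v = ∫ v in A 1, F v := by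
    apply setIntegral_congr_set
    rw [ae_eq_set]
    constructor
    · refine measure_mono_null ?_ hN
      rintro v ⟨hvS, hnot⟩
      obtain ⟨hord, h0, ht'⟩ := hvS
      have hcube' : v ∈ cube := fun i _ => ⟨h0 i, ht' i⟩
      by_contra hvN
      apply hnot
      refine ⟨?_, hcube'⟩
      intro i j hij
      rcases lt_or_eq_of_le (hord i j hij.le) with h | h
      · exact h
      · exact absurd ⟨i, j, ne_of_lt hij, h.symm⟩ hvN
    · have : A 1 \ S = ∅ := by
        rw [Set.diff_eq_empty]
        rintro v ⟨h1, h2⟩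
        refine ⟨fun i j hij => ?_, fun i => (h2 i trivial).1, fun i => (h2 i trivial).2⟩
        rcases eq_or_lt_of_le hij with h | h
        · exact le_of_eq (by rw [h])
        · exact (h1 i j h).le
      rw [this]
      exact measure_empty
  -- explicit computation of the cube integral
  have hq : ∫ x in Icc (0:ℝ) t, lam * Real.exp (-(lam * x)) = D := oneDimA lam t ht
  set E : ℝ := D/lam - t * Real.exp (-(lam*t)) with hEdef
  have hE : ∫ x in Icc (0:ℝ) t, x * (lam * Real.exp (-(lam * x))) = E := oneDimB lam t hlam ht
  have hP : ∀ v : Fin m → ℝ,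
      (∏ j, lam * Real.exp (-(lam * v j))) = lam ^ m * Real.exp (-(lam * ∑ j, v j)) := by
    intro v
    rw [Finset.prod_mul_distrib, Finset.prod_const, Finset.card_univ, Fintype.card_fin,
      ← Real.exp_sum]
    congr 1
    simp [Finset.mul_sum]
  have hqcont : Continuous fun v : Fin m → ℝ => ∏ j, lam * Real.exp (-(lam * v j)) :=
    continuous_finset_prod _ fun j _ =>
      continuous_const.mul
        (Real.continuous_exp.comp ((continuous_const.mul (continuous_apply j)).neg))
  have hI1 : ∫ v in cube, (2*t) * ∏ j, (lam * Real.exp (-(lam * v j))) = 2*t*D^m := by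
    rw [integral_const_mul, hcubedef, cubeProd m t (fun _ x => lam * Real.exp (-(lam * x))),
      Finset.prod_congr rfl fun (j : Fin m) _ => hq, Finset.prod_const, Finset.card_univ,
      Fintype.card_fin]
  have hI2 : ∀ j₀ : Fin m,
      ∫ v in cube, v j₀ * ∏ k, (lam * Real.exp (-(lam * v k))) = E * D^(m-1) := by
    intro j₀
    have heq : ∀ v : Fin m → ℝ, v j₀ * ∏ k, (lam * Real.exp (-(lam * v k)))
        = ∏ k, ((if k = j₀ then v k else 1) * (lam * Real.exp (-(lam * v k)))) := by
      intro v
      conv_rhs => rw [Finset.prod_mul_distrib]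
      have h : (∏ k, if k = j₀ then v k else 1) = v j₀ := by
        rw [Finset.prod_eq_single j₀ (fun k _ hk => if_neg hk)
          (fun h => absurd (Finset.mem_univ j₀) h), if_pos rfl]
      rw [h]
    simp_rw [heq]
    rw [hcubedef,
      cubeProd m t (fun k x => (if k = j₀ then x else 1) * (lam * Real.exp (-(lam * x))))]
    have hone : ∀ k : Fin m,
        (∫ x in Icc (0:ℝ) t, (if k = j₀ then x else 1) * (lam * Real.exp (-(lam * x))))
        = if k = j₀ then E else D := by
      intro k
      by_cases h : k = j₀
      · simp only [h, if_true]
        exact hE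
      · simp only [h, if_false, one_mul]
        exact hq
    rw [Finset.prod_congr rfl fun k _ => hone k,
      ← Finset.mul_prod_erase Finset.univ _ (Finset.mem_univ j₀)]
    simp only [if_pos rfl]
    congr 1
    rw [Finset.prod_congr rfl (fun k hk => if_neg (Finset.ne_of_mem_erase hk)),
      Finset.prod_const, Finset.card_erase_of_mem (Finset.mem_univ j₀), Finset.card_univ,
      Fintype.card_fin]
  have hintP : IntegrableOn (fun v : Fin m → ℝ =>
      (2*t) * ∏ j, (lam * Real.exp (-(lam * v j)))) cube :=
    hint _ (continuous_const.mul hqcont)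
  have hintS : IntegrableOn (fun v : Fin m → ℝ =>
      ∑ j, v j * ∏ k, (lam * Real.exp (-(lam * v k)))) cube :=
    hint _ (continuous_finset_sum _ fun j _ => (continuous_apply j).mul hqcont)
  have hcube_val : ∫ v in cube, F v = C/D^m * (2*t*D^m + (m:ℝ) * (E * D^(m-1))) := by
    have hF2 : ∀ v : Fin m → ℝ, F v = C/D^m *
        ((2*t) * (∏ j, (lam * Real.exp (-(lam * v j))))
          + ∑ j, v j * ∏ k, (lam * Real.exp (-(lam * v k)))) := by
      intro v
      simp only [hFdef, hP v]
      rw [← Finset.sum_mul]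
      ring
    rw [integral_congr_ae (Filter.Eventually.of_forall fun v => hF2 v),
      integral_const_mul, integral_add hintP hintS, hI1,
      integral_finset_sum _ (fun j _ => hint (fun v => v j * ∏ k, (lam * Real.exp (-(lam * v k))))
        ((continuous_apply j).mul hqcont)),
      Finset.sum_congr rfl (fun j _ => hI2 j), Finset.sum_const, Finset.card_univ,
      Fintype.card_fin, nsmul_eq_mul]
  have hA1val : ∫ v in A 1, F v = C/D^m * (2*t*D^m + (m:ℝ) * (E * D^(m-1))) / C := by
    rw [eq_div_iff hC.ne', mul_comm, ← hcubefact, hcube_val]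
  rw [hS, hA1val]
  have hpow : D ^ m = D ^ (m-1) * D := by
    rw [← pow_succ, Nat.sub_add_cancel hm]
  rw [hpow, hEdef]
  have hD1 : D ^ (m-1) ≠ 0 := pow_ne_zero _ hD.ne'
  field_simp

end YuleAux

/-- Theorem 2 of the paper: the expected total branch length of a Yule tree
with `n` leaves and depth `t`, i.e. the integral of `(2t + Σ t_j)` against the joint density
of the speciation times over the ordered simplex, equals `2t + ((n-2)/λ)(1 - y(λt))`
where `y(x) = x e^{-x}/(1 - e^{-x})`. -/
theorem yule_expected_total_length (n : ℕ) (hn : 3 ≤ n) (lam t : ℝ) (hlam : 0 < lam)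
    (ht : 0 < t) :
    (∫ v in {v : Fin (n - 2) → ℝ |
        (∀ i j : Fin (n - 2), i ≤ j → v j ≤ v i) ∧ (∀ i, 0 ≤ v i) ∧ ∀ i, v i ≤ t},
      (2 * t + ∑ j, v j) *
        ((Nat.factorial (n - 2) : ℝ) * lam ^ (n - 2) * Real.exp (-lam * ∑ j, v j) /
          (1 - Real.exp (-lam * t)) ^ (n - 2))) =
    2 * t + ((n : ℝ) - 2) / lam *
      (1 - lam * t * Real.exp (-(lam * t)) / (1 - Real.exp (-(lam * t)))) := by
  have h := YuleAux.yule_aux (n - 2) (by omega) lam t hlam ht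
  rw [h, Nat.cast_sub (by omega : 2 ≤ n)]
  norm_num
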